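/- Let G be a finite simple graph with at least one edge and let b be a positive integer. If a nice b-bounded edge coloring of G has k color classes and some b-bounded proper edge coloring of G has k' color classes, then k ≤ (3 − 2/√(2b))·k'. -/

import Mathlib

open Finset

/-- `⌈a / b⌉` for natural numbers. -/
def natCeilDiv (a b : ℕ) : ℕ := (a + b - 1) / b

/-- `P` is the ordered `b`-partition of `S` (w.r.t. weights `w`): the blocks are pairwise
disjoint, cover `S`, each has at most `b` elements, earlier blocks consist of heavier
elements, and all blocks except possibly the last have exactly `b` elements. -/
def IsOrderedBPartition {β : Type*} [DecidableEq β] (w : β → ℕ) (b : ℕ) (S : Finset β)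
    {k : ℕ} (P : Fin k → Finset β) : Prop :=
  (∀ i j : Fin k, i ≠ j → Disjoint (P i) (P j)) ∧
  Finset.univ.biUnion P = S ∧
  (∀ i, (P i).card ≤ b) ∧
  (∀ i j : Fin k, i < j → ∀ x ∈ P i, ∀ y ∈ P j, w y ≤ w x) ∧
  (∀ i j : Fin k, i < j → (P i).card = b)

/-- A `b`-bounded proper vertex coloring of `G` with color classes `C i`:
a partition of the vertex set into independent sets, each of cardinality at most `b`. -/
def IsBddProperVC {α : Type*} (G : SimpleGraph α) (b : ℕ)
    {ι : Type*} (C : ι → Finset α) : Prop :=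
  (∀ v : α, ∃! i, v ∈ C i) ∧
  (∀ i, ∀ u ∈ C i, ∀ v ∈ C i, ¬ G.Adj u v) ∧
  (∀ i, (C i).card ≤ b)

/-- A proper edge coloring of `G` with color classes `C i`: a partition of the edge set
into matchings. -/
def IsProperEC {α : Type*} [Fintype α] [DecidableEq α] (G : SimpleGraph α) [DecidableRel G.Adj]
    {ι : Type*} (C : ι → Finset (Sym2 α)) : Prop :=
  (∀ e ∈ G.edgeFinset, ∃! i, e ∈ C i) ∧
  (∀ i, C i ⊆ G.edgeFinset) ∧
  (∀ i, ∀ e ∈ C i, ∀ f ∈ C i, e ≠ f → ¬ ∃ v, v ∈ e ∧ v ∈ f)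

/-- A `b`-bounded proper edge coloring: a proper edge coloring each of whose classes has
cardinality at most `b`. -/
def IsBddProperEC {α : Type*} [Fintype α] [DecidableEq α] (G : SimpleGraph α) [DecidableRel G.Adj]
    (b : ℕ) {ι : Type*} (C : ι → Finset (Sym2 α)) : Prop :=
  IsProperEC G C ∧ ∀ i, (C i).card ≤ b

/-- A nice `b`-bounded edge coloring: a sequence `C 0, …, C (k-1)` of (nonempty) pairwise
disjoint matchings of `G` covering `E(G)`, each of cardinality at most `b`, such that each
`C i` has cardinality exactly `b` or is a maximal matching of the subgraph of `G` with edge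
set `E(G) \ (C 0 ∪ … ∪ C (i-1))`. -/
def IsNiceBddEC {α : Type*} [Fintype α] [DecidableEq α] (G : SimpleGraph α) [DecidableRel G.Adj]
    (b : ℕ) {k : ℕ} (C : Fin k → Finset (Sym2 α)) : Prop :=
  IsBddProperEC G b C ∧
  (∀ i, (C i).Nonempty) ∧
  (∀ i : Fin k, (C i).card = b ∨
    ∀ e ∈ G.edgeFinset, (∀ j, j ≤ i → e ∉ C j) → ∃ f ∈ C i, ∃ v, v ∈ e ∧ v ∈ f)

/-- A greedy (first-fit) `b`-bounded edge coloring of `G`: a `b`-bounded proper edge coloring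
`C` together with an enumeration `e` of the edges in nonincreasing order of weight and a color
assignment `c` with `e j ∈ C (c j)`, such that each edge is placed in the first color that is
not full and contains no adjacent edge at the moment of placement. -/
def IsGreedyEC {α : Type*} [Fintype α] [DecidableEq α] (G : SimpleGraph α) [DecidableRel G.Adj]
    (w : Sym2 α → ℕ) (b : ℕ) {k m : ℕ} (C : Fin k → Finset (Sym2 α))
    (e : Fin m → Sym2 α) (c : Fin m → Fin k) : Prop :=
  IsBddProperEC G b C ∧
  Function.Injective e ∧
  (∀ f, f ∈ G.edgeFinset ↔ ∃ j, e j = f) ∧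
  (∀ j j' : Fin m, j ≤ j' → w (e j') ≤ w (e j)) ∧
  (∀ j, e j ∈ C (c j)) ∧
  (∀ j : Fin m, ∀ i : Fin k, i < c j →
    ((Finset.univ.filter fun l : Fin m => l < j ∧ c l = i)).card = b ∨
      ∃ l : Fin m, l < j ∧ c l = i ∧ e l ≠ e j ∧ ∃ v, v ∈ e l ∧ v ∈ e j)

/-- The arithmetic core of the proof. -/
lemma arithCoreAux {r K t x y z D : ℝ} (hr : 2 ≤ r) (hz : 1 ≤ z)
    (hx : 0 ≤ x) (hy : 0 ≤ y) (hxK : x + z ≤ K) (hyK : y + z ≤ K)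
    (hD : x*y + x + y + 2*z ≤ 2*D) (hbud : t*(r^2/2) + D ≤ K*(r^2/2)) :
    t + (x + y + z) ≤ (3 - 2/r)*K := by
  have hr0 : (0:ℝ) < r := lt_of_lt_of_le two_pos hr
  set w : ℝ := K - z with hw
  have hxw : x ≤ w := by simp only [hw]; linarith
  have hyw : y ≤ w := by simp only [hw]; linarith
  have hw0 : 0 ≤ w := le_trans hx hxw
  have hK : K = w + z := by simp [hw]
  have hf : 0 ≤ x*y + x + y + 2*z - r^2*(x+y+z) + 2*K*r^2 - 2*K*r := by
    have hF00 : 0 ≤ z*(r^2-2*r+2) + 2*w*r*(r-1) := by nlinarith [sq_nonneg (r-1)]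
    have hFw0 : 0 ≤ w*(r-1)^2 + z*(r^2-2*r+2) := by nlinarith [sq_nonneg (r-1)]
    have hFww : 0 ≤ w^2 - 2*w*(r-1) + z*(r^2-2*r+2) := by nlinarith [sq_nonneg (w - r + 1)]
    rcases eq_or_lt_of_le hw0 with h0 | hw0'
    · have hx0 : x = 0 := le_antisymm (h0 ▸ hxw) hx
      have hy0 : y = 0 := le_antisymm (h0 ▸ hyw) hy
      subst hx0; subst hy0
      have hKz : K = z := by linarith
      subst hKz
      nlinarith [sq_nonneg (r-1)]
    · have hid : w^2 * (x*y + x + y + 2*z - r^2*(x+y+z) + 2*K*r^2 - 2*K*r)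
          = (w-x)*(w-y)*(z*(r^2-2*r+2) + 2*w*r*(r-1))
            + (x*(w-y) + (w-x)*y)*(w*(r-1)^2 + z*(r^2-2*r+2))
            + x*y*(w^2 - 2*w*(r-1) + z*(r^2-2*r+2)) := by
        rw [hK]; ring
      have hpos : 0 ≤ w^2 * (x*y + x + y + 2*z - r^2*(x+y+z) + 2*K*r^2 - 2*K*r) := by
        rw [hid]
        have h1 : 0 ≤ (w-x)*(w-y)*(z*(r^2-2*r+2) + 2*w*r*(r-1)) :=
          mul_nonneg (mul_nonneg (by linarith) (by linarith)) hF00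
        have h2 : 0 ≤ (x*(w-y) + (w-x)*y)*(w*(r-1)^2 + z*(r^2-2*r+2)) :=
          mul_nonneg (by nlinarith) hFw0
        have h3 : 0 ≤ x*y*(w^2 - 2*w*(r-1) + z*(r^2-2*r+2)) :=
          mul_nonneg (mul_nonneg hx hy) hFww
        linarith
      nlinarith [hpos, pow_pos hw0' 2]
  have h1 : t * r^2 ≤ K*r^2 - 2*D := by nlinarith [hbud]
  have h2 : (x+y+z)*r^2 ≤ 2*D + 2*K*r^2 - 2*K*r := by nlinarith [hf, hD]
  have h3 : (t + (x+y+z)) * r^2 ≤ ((3 - 2/r)*K) * r^2 := by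
    have hrr : ((3 - 2/r)*K) * r^2 = 3*K*r^2 - 2*K*r := by
      field_simp
    rw [hrr]; linarith
  exact le_of_mul_le_mul_right h3 (by positivity)

/-- Partition of a finite set into classes: the class cardinalities add up. -/
lemma partitionCardAux {γ : Type*} [DecidableEq γ] {n : ℕ} (E : Finset γ) (C : Fin n → Finset γ)
    (huniq : ∀ e ∈ E, ∃! i, e ∈ C i) (hsub : ∀ i, C i ⊆ E) :
    ∑ i, (C i).card = E.card := by
  have hE : E = Finset.univ.biUnion C := by
    apply le_antisymm
    · intro g hg
      obtain ⟨i, hi, -⟩ := huniq g hg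
      exact mem_biUnion.mpr ⟨i, mem_univ i, hi⟩
    · intro g hg
      obtain ⟨i, -, hi⟩ := mem_biUnion.mp hg
      exact hsub i hi
  rw [hE, card_biUnion]
  intro i _ j _ hij
  rw [Function.onFun, disjoint_left]
  intro g hgi hgj
  obtain ⟨w, -, hw⟩ := huniq g (hsub i hgi)
  exact hij ((hw i hgi).trans (hw j hgj).symm)


/-- If a graph `G` with at least one edge has a nice `b`-bounded edge coloring with `k`
classes and some `b`-bounded proper edge coloring with `k'` classes, then
`k ≤ (3 − 2/√(2b))·k'`. -/
theorem stmt_7 {α : Type*} [Fintype α] [DecidableEq α] (G : SimpleGraph α) [DecidableRel G.Adj]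
    (hE : G.edgeFinset.Nonempty) (b : ℕ) (hb : 0 < b)
    (k k' : ℕ) (C : Fin k → Finset (Sym2 α)) (C' : Fin k' → Finset (Sym2 α))
    (hC : IsNiceBddEC G b C) (hC' : IsBddProperEC G b C') :
    (k : ℝ) ≤ (3 - 2 / Real.sqrt (2 * b)) * (k' : ℝ) := by
  classical
  obtain ⟨⟨⟨hCuniq, hCsub, hCmatch⟩, hCcard⟩, hCne, hCnice⟩ := hC
  obtain ⟨⟨hC'uniq, hC'sub, hC'match⟩, hC'card⟩ := hC'
  -- edge counts
  have hsumC : ∑ i, (C i).card = G.edgeFinset.card := partitionCardAux _ C hCuniq hCsub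
  have hsumC' : ∑ i, (C' i).card = G.edgeFinset.card := partitionCardAux _ C' hC'uniq hC'sub
  have hmk' : G.edgeFinset.card ≤ k' * b := by
    rw [← hsumC']
    calc ∑ i, (C' i).card ≤ ∑ _i : Fin k', b := Finset.sum_le_sum (fun i _ => hC'card i)
      _ = k' * b := by simp [Finset.sum_const, Finset.card_univ]
  have hmpos : 0 < G.edgeFinset.card := Finset.card_pos.mpr hE
  have hk'pos : 0 < k' := by
    rcases Nat.eq_zero_or_pos k' with h | h
    · subst h; rw [Nat.zero_mul] at hmk'; omega
    · exact h
  -- full and small classes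
  set S : Finset (Fin k) := univ.filter (fun i => (C i).card ≠ b) with hSdef
  set F : Finset (Fin k) := univ.filter (fun i => (C i).card = b) with hFdef
  have hFS : F.card + S.card = k := by
    rw [hFdef, hSdef, Finset.card_filter_add_card_filter_not]
    simp
  have hsumF : ∑ i ∈ F, (C i).card = F.card * b := by
    rw [Finset.sum_congr rfl (fun i hi => (Finset.mem_filter.mp hi).2), Finset.sum_const,
      smul_eq_mul]
  have hsplit : F.card * b + ∑ i ∈ S, (C i).card = G.edgeFinset.card := by
    rw [← hsumF, ← hsumC]
    rw [← Finset.sum_union (Finset.disjoint_filter_filter_not univ univ _)]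
    congr 1
    exact Finset.filter_union_filter_not_eq _ _
  -- case: no small classes
  rcases Finset.eq_empty_or_nonempty S with hSemp | hSne
  · have hkt : F.card = k := by
      have hS0 : S.card = 0 := by rw [hSemp]; simp
      omega
    have hkk' : k ≤ k' := by
      have : k * b ≤ k' * b := by
        rw [← hkt]
        calc F.card * b = F.card * b + ∑ i ∈ S, (C i).card := by rw [hSemp]; simp
          _ = G.edgeFinset.card := hsplit
          _ ≤ k' * b := hmk'
      exact Nat.le_of_mul_le_mul_right this hb
    have hsq1 : (1:ℝ) ≤ Real.sqrt (2*b) := by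
      rw [show (1:ℝ) = Real.sqrt 1 by simp]
      apply Real.sqrt_le_sqrt
      have : (1:ℝ) ≤ (b:ℝ) := by exact_mod_cast hb
      linarith
    have hcoef : (1:ℝ) ≤ 3 - 2 / Real.sqrt (2*b) := by
      have h2 : 2 / Real.sqrt (2*b) ≤ 2 := by
        rw [div_le_iff₀ (by positivity)]
        nlinarith
      linarith
    calc (k:ℝ) ≤ (k':ℝ) := by exact_mod_cast hkk'
      _ = 1 * (k':ℝ) := by ring
      _ ≤ (3 - 2 / Real.sqrt (2*b)) * (k':ℝ) := by
        apply mul_le_mul_of_nonneg_right hcoef (by positivity)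
  -- main case
  · -- basic facts about classes
    have hdisjC : ∀ {g : Sym2 α} {i i' : Fin k}, g ∈ C i → g ∈ C i' → i = i' := by
      intro g i i' hi hi'
      obtain ⟨w, -, hw⟩ := hCuniq g (hCsub i hi)
      exact (hw i hi).trans (hw i' hi').symm
    have hsmall : ∀ j ∈ S, (C j).card < b := fun j hj =>
      lt_of_le_of_ne (hCcard j) (Finset.mem_filter.mp hj).2
    have hmaxS : ∀ j ∈ S, ∀ g ∈ G.edgeFinset, (∀ i, i ≤ j → g ∉ C i) →
        ∃ f ∈ C j, ∃ w, w ∈ g ∧ w ∈ f := by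
      intro j hj
      rcases hCnice j with h | h
      · exact absurd h (Finset.mem_filter.mp hj).2
      · exact h
    have hnotbefore : ∀ {j l : Fin k}, j < l → ∀ g ∈ C l, ∀ i, i ≤ j → g ∉ C i := by
      intro j l hjl g hg i hij hgi
      have : i = l := hdisjC hgi hg
      subst this
      exact absurd hij (not_le.mpr hjl)
    -- the last small class and one of its edges
    set jm : Fin k := S.max' hSne with hjmdef
    have hjm : jm ∈ S := S.max'_mem hSne
    obtain ⟨e, he⟩ := hCne jm
    have heE : e ∈ G.edgeFinset := hCsub jm he
    obtain ⟨u, v, rfl⟩ : ∃ u v, e = s(u, v) :=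
      Sym2.inductionOn e (fun x y => ⟨x, y, rfl⟩)
    have hb2 : 2 ≤ b := by
      have h1 : 0 < (C jm).card := Finset.card_pos.mpr ⟨_, he⟩
      have h2 := hsmall jm hjm
      omega
    have hue : u ∈ (s(u,v) : Sym2 α) := Sym2.mem_iff.mpr (Or.inl rfl)
    have hve : v ∈ (s(u,v) : Sym2 α) := Sym2.mem_iff.mpr (Or.inr rfl)
    -- the classes touching u resp. v
    set U : Finset (Fin k) := S.filter (fun j => ∃ g ∈ C j, u ∈ g) with hUdef
    set V : Finset (Fin k) := S.filter (fun j => ∃ g ∈ C j, v ∈ g) with hVdef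
    have hjmU : jm ∈ U := Finset.mem_filter.mpr ⟨hjm, s(u,v), he, hue⟩
    have hjmV : jm ∈ V := Finset.mem_filter.mpr ⟨hjm, s(u,v), he, hve⟩
    have hScover : S = U ∪ V := by
      apply Finset.Subset.antisymm
      · intro j hj
        by_cases hjm' : j = jm
        · subst hjm'; exact Finset.mem_union_left _ hjmU
        · have hjlt : j < jm := lt_of_le_of_ne (S.le_max' j hj) hjm'
          obtain ⟨f, hf, w, hwe, hwf⟩ :=
            hmaxS j hj s(u,v) heE (hnotbefore hjlt _ he)
          rcases Sym2.mem_iff.mp hwe with rfl | rfl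
          · exact Finset.mem_union_left _ (Finset.mem_filter.mpr ⟨hj, f, hf, hwf⟩)
          · exact Finset.mem_union_right _ (Finset.mem_filter.mpr ⟨hj, f, hf, hwf⟩)
      · exact Finset.union_subset (Finset.filter_subset _ _) (Finset.filter_subset _ _)
    -- degree bound: classes with an edge at a fixed vertex are at most k'
    have hdeg : ∀ (a : α) (W : Finset (Fin k)), (∀ j ∈ W, ∃ g ∈ C j, a ∈ g) → W.card ≤ k' := by
      intro a W hW
      haveI : Inhabited (Fin k') := ⟨⟨0, hk'pos⟩⟩
      haveI : Inhabited (Sym2 α) := ⟨s(u,v)⟩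
      have hex : ∀ j ∈ W, ∃ p : Sym2 α × Fin k', p.1 ∈ C j ∧ a ∈ p.1 ∧ p.1 ∈ C' p.2 := by
        intro j hj
        obtain ⟨g, hg, hag⟩ := hW j hj
        obtain ⟨i, hi, -⟩ := hC'uniq g (hCsub j hg)
        exact ⟨(g, i), hg, hag, hi⟩
      choose! p hp1 hp2 hp3 using hex
      have hinj : Set.InjOn (fun j => (p j).2) W := by
        intro j hj j' hj' hEq
        simp only at hEq
        have h2' : (p j').1 ∈ C' (p j).2 := by rw [hEq]; exact hp3 j' hj'
        by_cases hgg : (p j).1 = (p j').1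
        · exact hdisjC (hp1 j hj) (hgg ▸ hp1 j' hj')
        · exact absurd ⟨a, hp2 j hj, hp2 j' hj'⟩
            (hC'match _ _ (hp3 j hj) _ h2' hgg)
      calc W.card ≤ (univ : Finset (Fin k')).card :=
            Finset.card_le_card_of_injOn _ (fun _ _ => Finset.mem_univ _) hinj
        _ = k' := by simp
    have hUk' : U.card ≤ k' := hdeg u U (fun j hj => (Finset.mem_filter.mp hj).2)
    have hVk' : V.card ≤ k' := hdeg v V (fun j hj => (Finset.mem_filter.mp hj).2)
    -- the three parts
    set X : Finset (Fin k) := U \ V with hXdef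
    set Y : Finset (Fin k) := V \ U with hYdef
    set Z : Finset (Fin k) := U ∩ V with hZdef
    have hxzU : X.card + Z.card = U.card := by
      rw [hXdef, hZdef]; exact Finset.card_sdiff_add_card_inter U V
    have hyzV : Y.card + Z.card = V.card := by
      rw [hYdef, hZdef, Finset.inter_comm U V]; exact Finset.card_sdiff_add_card_inter V U
    have hZ1 : 1 ≤ Z.card := Finset.card_pos.mpr ⟨jm, Finset.mem_inter.mpr ⟨hjmU, hjmV⟩⟩
    -- bound on vertex sets of classes
    have hends : ∀ g : Sym2 α, (univ.filter (· ∈ g)).card ≤ 2 := by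
      intro g
      induction g using Sym2.ind with
      | _ a c =>
        have hsub3 : univ.filter (· ∈ (s(a,c) : Sym2 α)) ⊆ {a, c} := by
          intro w hw
          have := (Finset.mem_filter.mp hw).2
          rcases Sym2.mem_iff.mp this with rfl | rfl
          · exact Finset.mem_insert_self _ _
          · exact Finset.mem_insert_of_mem (Finset.mem_singleton_self _)
        calc (univ.filter (· ∈ (s(a,c) : Sym2 α))).card ≤ ({a, c} : Finset α).card :=
              Finset.card_le_card hsub3
          _ ≤ 2 := le_trans (Finset.card_insert_le _ _) (by simp)
    -- key injection: for a one-sided small class, later opposite-side classes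
    -- inject into its vertex set minus the shared endpoint
    have hside : ∀ (a c : α), s(a, c) = s(u, v) → ∀ j ∈ S, (∃ g ∈ C j, a ∈ g) →
        (¬ ∃ g ∈ C j, c ∈ g) →
        ((S.filter (fun l => ∃ g ∈ C l, c ∈ g)).filter (fun l => j < l)).card
          ≤ 2 * (C j).card := by
      intro a c hac j hjS hja hjc
      haveI : Inhabited α := ⟨u⟩
      have hce : c ∈ (s(a,c) : Sym2 α) := Sym2.mem_iff.mpr (Or.inr rfl)
      have hjlt : j < jm := by
        refine lt_of_le_of_ne (S.le_max' j hjS) ?_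
        rintro rfl
        exact hjc ⟨s(u,v), he, by rw [← hac] at *; exact hce⟩
      set W : Finset (Fin k) :=
        (S.filter (fun l => ∃ g ∈ C l, c ∈ g)).filter (fun l => j < l) with hWdef
      have hjmW : jm ∈ W := by
        refine Finset.mem_filter.mpr ⟨Finset.mem_filter.mpr ⟨hjm, ⟨s(u,v), he, ?_⟩⟩, hjlt⟩
        rw [← hac]; exact hce
      -- for each later opposite class, produce the attachment vertex
      have hstep : ∀ l ∈ W.erase jm, ∃ ω : α,
          ω ≠ a ∧ (∃ f ∈ C j, ω ∈ f) ∧ s(c, ω) ∈ C l := by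
        intro l hl
        obtain ⟨hlne, hlW⟩ := Finset.mem_erase.mp hl
        obtain ⟨hlV, hjl⟩ := Finset.mem_filter.mp hlW
        obtain ⟨hlS, g, hgl, hcg⟩ := Finset.mem_filter.mp hlV
        have hgeq : s(c, Sym2.Mem.other' hcg) = g := Sym2.other_spec' hcg
        set ω : α := Sym2.Mem.other' hcg with hωdef
        have hgne : g ≠ s(u,v) := by
          intro hgE
          exact hlne (hdisjC hgl (hgE ▸ he))
        have hωa : ω ≠ a := by
          intro hωa
          apply hgne
          rw [← hgeq, hωa, Sym2.eq_swap, hac]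
        obtain ⟨f, hf, w, hwg, hwf⟩ :=
          hmaxS j hjS g (hCsub l hgl) (hnotbefore hjl _ hgl)
        have hwmem : w = c ∨ w = ω := by
          rw [← hgeq] at hwg
          exact Sym2.mem_iff.mp hwg
        rcases hwmem with rfl | rfl
        · exact absurd ⟨f, hf, hwf⟩ hjc
        · exact ⟨ω, hωa, ⟨f, hf, hwf⟩, hgeq ▸ hgl⟩
      choose! ω hω1 hω2 hω3 using hstep
      set T : Finset α := ((C j).biUnion (fun g => univ.filter (· ∈ g))).erase a with hTdef
      have hmapT : ∀ l ∈ W.erase jm, ω l ∈ T := by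
        intro l hl
        obtain ⟨f, hf, hωf⟩ := hω2 l hl
        refine Finset.mem_erase.mpr ⟨hω1 l hl, Finset.mem_biUnion.mpr
          ⟨f, hf, Finset.mem_filter.mpr ⟨Finset.mem_univ _, hωf⟩⟩⟩
      have hinj : Set.InjOn ω (W.erase jm) := by
        intro l hl l' hl' hEq
        have h1 : s(c, ω l) ∈ C l := hω3 l hl
        have h2 : s(c, ω l') ∈ C l' := hω3 l' hl'
        rw [← hEq] at h2
        exact hdisjC h1 h2
      have hWT : (W.erase jm).card ≤ T.card :=
        Finset.card_le_card_of_injOn ω hmapT hinj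
      have haBI : a ∈ (C j).biUnion (fun g => univ.filter (· ∈ g)) := by
        obtain ⟨g, hg, hag⟩ := hja
        exact Finset.mem_biUnion.mpr ⟨g, hg, Finset.mem_filter.mpr ⟨Finset.mem_univ _, hag⟩⟩
      have hT1 : T.card + 1 = ((C j).biUnion (fun g => univ.filter (· ∈ g))).card :=
        Finset.card_erase_add_one haBI
      have hBI2 : ((C j).biUnion (fun g => univ.filter (· ∈ g))).card ≤ 2 * (C j).card := by
        calc ((C j).biUnion (fun g => univ.filter (· ∈ g))).card
            ≤ ∑ g ∈ C j, (univ.filter (· ∈ g)).card := Finset.card_biUnion_le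
          _ ≤ ∑ _g ∈ C j, 2 := Finset.sum_le_sum (fun g _ => hends g)
          _ = 2 * (C j).card := by rw [Finset.sum_const, smul_eq_mul, mul_comm]
      have hW1 : (W.erase jm).card + 1 = W.card := Finset.card_erase_add_one hjmW
      omega
    -- per-class bounds for the X side and the Y side
    have hXbound : ∀ j ∈ X, (Y.filter (fun l => j < l)).card + 1 ≤ 2 * (C j).card := by
      intro j hj
      obtain ⟨hjU, hjV⟩ := Finset.mem_sdiff.mp hj
      have hjS : j ∈ S := Finset.mem_of_mem_filter j hjU
      have hja : ∃ g ∈ C j, u ∈ g := (Finset.mem_filter.mp hjU).2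
      have hjc : ¬ ∃ g ∈ C j, v ∈ g := by
        intro hcon
        exact hjV (Finset.mem_filter.mpr ⟨hjS, hcon⟩)
      have hVafter := hside u v rfl j hjS hja hjc
      -- V.filter (j < ·) contains jm and Y.filter (j < ·)
      have hjlt : j < jm := by
        refine lt_of_le_of_ne (S.le_max' j hjS) ?_
        rintro rfl
        exact hjc ⟨s(u,v), he, hve⟩
      have hsub2 : insert jm (Y.filter (fun l => j < l)) ⊆ V.filter (fun l => j < l) := by
        intro l hl
        rcases Finset.mem_insert.mp hl with rfl | hl
        · exact Finset.mem_filter.mpr ⟨hjmV, hjlt⟩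
        · obtain ⟨hlY, hjl⟩ := Finset.mem_filter.mp hl
          exact Finset.mem_filter.mpr ⟨(Finset.mem_sdiff.mp hlY).1, hjl⟩
      have hjmnotY : jm ∉ Y.filter (fun l => j < l) := by
        intro hcon
        exact (Finset.mem_sdiff.mp (Finset.mem_of_mem_filter jm hcon)).2 hjmU
      have hcard2 : (Y.filter (fun l => j < l)).card + 1 ≤ (V.filter (fun l => j < l)).card := by
        have := Finset.card_le_card hsub2
        rwa [Finset.card_insert_of_notMem hjmnotY] at this
      have hVW : (V.filter (fun l => j < l)).card ≤ 2 * (C j).card := by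
        rw [hVdef]
        exact hVafter
      omega
    have hYbound : ∀ j ∈ Y, (X.filter (fun l => j < l)).card + 1 ≤ 2 * (C j).card := by
      intro j hj
      obtain ⟨hjV, hjU⟩ := Finset.mem_sdiff.mp hj
      have hjS : j ∈ S := Finset.mem_of_mem_filter j hjV
      have hja : ∃ g ∈ C j, v ∈ g := (Finset.mem_filter.mp hjV).2
      have hjc : ¬ ∃ g ∈ C j, u ∈ g := by
        intro hcon
        exact hjU (Finset.mem_filter.mpr ⟨hjS, hcon⟩)
      have hUafter := hside v u (Sym2.eq_swap) j hjS hja hjc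
      have hjlt : j < jm := by
        refine lt_of_le_of_ne (S.le_max' j hjS) ?_
        rintro rfl
        exact hjc ⟨s(u,v), he, hue⟩
      have hsub2 : insert jm (X.filter (fun l => j < l)) ⊆ U.filter (fun l => j < l) := by
        intro l hl
        rcases Finset.mem_insert.mp hl with rfl | hl
        · exact Finset.mem_filter.mpr ⟨hjmU, hjlt⟩
        · obtain ⟨hlX, hjl⟩ := Finset.mem_filter.mp hl
          exact Finset.mem_filter.mpr ⟨(Finset.mem_sdiff.mp hlX).1, hjl⟩
      have hjmnotX : jm ∉ X.filter (fun l => j < l) := by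
        intro hcon
        exact (Finset.mem_sdiff.mp (Finset.mem_of_mem_filter jm hcon)).2 hjmV
      have hcard2 : (X.filter (fun l => j < l)).card + 1 ≤ (U.filter (fun l => j < l)).card := by
        have := Finset.card_le_card hsub2
        rwa [Finset.card_insert_of_notMem hjmnotX] at this
      have hUW : (U.filter (fun l => j < l)).card ≤ 2 * (C j).card := by
        rw [hUdef]
        exact hUafter
      omega
    -- pair counting
    have hdisjXY : ∀ j ∈ X, ∀ l ∈ Y, j ≠ l := by
      intro j hj l hl hEq
      subst hEq
      exact (Finset.mem_sdiff.mp hj).2 (Finset.mem_sdiff.mp hl).1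
    have hNM : (∑ j ∈ X, (Y.filter (fun l => j < l)).card)
        + (∑ j ∈ Y, (X.filter (fun l => j < l)).card) = X.card * Y.card := by
      have e1 : (∑ j ∈ X, (Y.filter (fun l => j < l)).card)
          = ∑ j ∈ X, ∑ l ∈ Y, (if j < l then 1 else 0) :=
        Finset.sum_congr rfl (fun j _ => by rw [Finset.card_filter])
      have e2 : (∑ j ∈ Y, (X.filter (fun l => j < l)).card)
          = ∑ j ∈ X, ∑ l ∈ Y, (if l < j then 1 else 0) := by
        rw [Finset.sum_comm]
        exact Finset.sum_congr rfl (fun j _ => by rw [Finset.card_filter])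
      have h3 : ∀ j ∈ X, ((∑ l ∈ Y, (if j < l then 1 else 0))
          + (∑ l ∈ Y, (if l < j then 1 else 0))) = Y.card := by
        intro j hj
        rw [← Finset.sum_add_distrib, Finset.card_eq_sum_ones]
        refine Finset.sum_congr rfl (fun l hl => ?_)
        have hne := hdisjXY j hj l hl
        rcases lt_trichotomy j l with h | h | h
        · simp [h, not_lt.mpr (le_of_lt h)]
        · exact absurd h hne
        · simp [h, not_lt.mpr (le_of_lt h)]
      calc (∑ j ∈ X, (Y.filter (fun l => j < l)).card)
            + (∑ j ∈ Y, (X.filter (fun l => j < l)).card)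
          = ∑ j ∈ X, ((∑ l ∈ Y, (if j < l then 1 else 0))
              + (∑ l ∈ Y, (if l < j then 1 else 0))) := by
            rw [e1, e2, ← Finset.sum_add_distrib]
        _ = ∑ _j ∈ X, Y.card := Finset.sum_congr rfl h3
        _ = X.card * Y.card := by rw [Finset.sum_const, smul_eq_mul]
    -- summations
    have hXsum : (∑ j ∈ X, (Y.filter (fun l => j < l)).card) + X.card
        ≤ 2 * ∑ j ∈ X, (C j).card := by
      rw [Finset.mul_sum]
      calc (∑ j ∈ X, (Y.filter (fun l => j < l)).card) + X.card
          = ∑ j ∈ X, ((Y.filter (fun l => j < l)).card + 1) := by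
            rw [Finset.sum_add_distrib, Finset.sum_const, smul_eq_mul, mul_one]
        _ ≤ ∑ j ∈ X, 2 * (C j).card := Finset.sum_le_sum hXbound
    have hYsum : (∑ j ∈ Y, (X.filter (fun l => j < l)).card) + Y.card
        ≤ 2 * ∑ j ∈ Y, (C j).card := by
      rw [Finset.mul_sum]
      calc (∑ j ∈ Y, (X.filter (fun l => j < l)).card) + Y.card
          = ∑ j ∈ Y, ((X.filter (fun l => j < l)).card + 1) := by
            rw [Finset.sum_add_distrib, Finset.sum_const, smul_eq_mul, mul_one]
        _ ≤ ∑ j ∈ Y, 2 * (C j).card := Finset.sum_le_sum hYbound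
    have hZsum : Z.card ≤ ∑ j ∈ Z, (C j).card := by
      calc Z.card = ∑ _j ∈ Z, 1 := by rw [Finset.sum_const, smul_eq_mul, mul_one]
        _ ≤ ∑ j ∈ Z, (C j).card :=
          Finset.sum_le_sum (fun j _ => Finset.card_pos.mpr (hCne j))
    -- decomposition of the sum over S
    have hSdecomp : ∑ j ∈ S, (C j).card
        = (∑ j ∈ X, (C j).card) + (∑ j ∈ Y, (C j).card) + (∑ j ∈ Z, (C j).card) := by
      have hUV : S = U ∪ V := hScover
      have e1 : U ∪ V = U ∪ Y := by rw [hYdef, Finset.union_sdiff_self_eq_union]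
      have e2 : U = X ∪ Z := by rw [hXdef, hZdef, Finset.sdiff_union_inter]
      have d1 : Disjoint U Y := by
        rw [hYdef]; exact Finset.disjoint_sdiff
      have d2 : Disjoint X Z := by
        rw [hXdef, hZdef]
        exact Finset.disjoint_left.mpr
          (fun a ha hb => (Finset.mem_sdiff.mp ha).2 (Finset.mem_inter.mp hb).2)
      rw [hUV, e1, Finset.sum_union d1, e2, Finset.sum_union d2]
      ring
    have hScard : S.card = X.card + Y.card + Z.card := by
      have hUV : S = U ∪ V := hScover
      have e1 : U ∪ V = U ∪ Y := by rw [hYdef, Finset.union_sdiff_self_eq_union]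
      have e2 : U = X ∪ Z := by rw [hXdef, hZdef, Finset.sdiff_union_inter]
      have d1 : Disjoint U Y := by rw [hYdef]; exact Finset.disjoint_sdiff
      have d2 : Disjoint X Z := by
        rw [hXdef, hZdef]
        exact Finset.disjoint_left.mpr
          (fun a ha hb => (Finset.mem_sdiff.mp ha).2 (Finset.mem_inter.mp hb).2)
      rw [hUV, e1, Finset.card_union_of_disjoint d1, e2, Finset.card_union_of_disjoint d2]
      omega
    -- collected natural-number facts
    have hkey : X.card * Y.card + X.card + Y.card + 2 * Z.card
        ≤ 2 * ∑ j ∈ S, (C j).card := by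
      linarith [hXsum, hYsum, hZsum, hNM, hSdecomp]
    have hbudget : F.card * b + (∑ j ∈ S, (C j).card) ≤ k' * b := by
      linarith [hsplit, hmk']
    have hUcard' : X.card + Z.card ≤ k' := by omega
    have hVcard' : Y.card + Z.card ≤ k' := by omega
    -- pass to the reals
    set r : ℝ := Real.sqrt (2 * b) with hrdef
    have hrsq : r ^ 2 = 2 * (b:ℝ) := Real.sq_sqrt (by positivity)
    have hr2 : (2:ℝ) ≤ r := by
      have h4 : (4:ℝ) ≤ 2 * (b:ℝ) := by
        have : (2:ℝ) ≤ (b:ℝ) := by exact_mod_cast hb2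
        linarith
      nlinarith [Real.sqrt_nonneg (2*(b:ℝ)), hrsq]
    have harith : (F.card : ℝ) + ((X.card:ℝ) + (Y.card:ℝ) + (Z.card:ℝ))
        ≤ (3 - 2/r) * (k' : ℝ) := by
      apply arithCoreAux (D := ((∑ j ∈ S, (C j).card : ℕ) : ℝ)) hr2
      · exact_mod_cast hZ1
      · exact Nat.cast_nonneg _
      · exact Nat.cast_nonneg _
      · exact_mod_cast hUcard'
      · exact_mod_cast hVcard'
      · exact_mod_cast hkey
      · have hb_eq : ((b:ℝ)) = r^2/2 := by rw [hrsq]; ring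
        have hcast : (F.card : ℝ) * (b:ℝ) + ((∑ j ∈ S, (C j).card : ℕ):ℝ)
            ≤ (k':ℝ) * (b:ℝ) := by exact_mod_cast hbudget
        rw [hb_eq] at hcast
        exact hcast
    have hkeq : (k : ℝ) = (F.card : ℝ) + ((X.card:ℝ) + (Y.card:ℝ) + (Z.card:ℝ)) := by
      have h : k = F.card + (X.card + Y.card + Z.card) := by omega
      exact_mod_cast h
    rw [hkeq]
    exact harith
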